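/- Let M be a square matrix with nonnegative integer entries indexed by a finite alphabet A, such that no column of M is zero. Then there exist positive integers p ≥ 1, q ≥ 0, l ≥ q+1 and a partition {A_1, ..., A_l} of A such that M^p, in block form with respect to this partition, is lower block-triangular, the diagonal blocks M_i for 1 ≤ i ≤ q are primitive or zero, the diagonal blocks M_i for q+1 ≤ i ≤ l are primitive, the off-diagonal blocks M_{i,j} with both i,j > q are zero, and for every 1 ≤ i ≤ q there exists j with i+1 ≤ j ≤ l such that the block M_{i,j} (the block in row-group A_j, column-group A_i, i.e., recording letters of A_j produced from A_i) is nonzero. -/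

import Mathlib

/-- A nonnegative matrix is primitive if some power has all entries strictly positive. -/
def MatPrimitive {n : Type*} [Fintype n] [DecidableEq n] (M : Matrix n n ℕ) : Prop :=
  ∃ k, 0 < k ∧ ∀ i j, 0 < (M ^ k) i j

private lemma prodPos {A : Type*} [Fintype A] (B C : Matrix A A ℕ) (x y : A) :
    0 < (B * C) x y ↔ ∃ z, 0 < B x z ∧ 0 < C z y := by
  rw [Matrix.mul_apply]
  constructor
  · intro h
    by_contra hc
    have hz : ∀ z ∈ Finset.univ, B x z * C z y = 0 := by
      intro z _
      rcases Nat.eq_zero_or_pos (B x z) with h1 | h1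
      · simp [h1]
      rcases Nat.eq_zero_or_pos (C z y) with h2 | h2
      · simp [h2]
      exact absurd ⟨z, h1, h2⟩ hc
    rw [Finset.sum_eq_zero hz] at h
    exact lt_irrefl 0 h
  · rintro ⟨z, h1, h2⟩
    have := Finset.single_le_sum (f := fun z => B x z * C z y)
      (fun i _ => Nat.zero_le _) (Finset.mem_univ z)
    exact lt_of_lt_of_le (Nat.mul_pos h1 h2) this

private lemma existsPower {A : Type*} [Fintype A] [DecidableEq A] (M : Matrix A A ℕ) :
    ∃ p, 0 < p ∧ ∀ x y, (0 < (M ^ (2 * p)) x y ↔ 0 < (M ^ p) x y) := by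
  classical
  set F : ℕ → A → A → Bool := fun n x y => decide (0 < (M ^ (n + 1)) x y) with hF
  obtain ⟨a0, b0, hab, hf0⟩ := Finite.exists_ne_map_eq_of_infinite F
  obtain ⟨a, b, hlt, hf⟩ : ∃ a b, a < b ∧ F a = F b := by
    rcases hab.lt_or_gt with h | h
    exacts [⟨a0, b0, h, hf0⟩, ⟨b0, a0, h, hf0.symm⟩]
  set i := a + 1 with hi
  set t := b - a with htdef
  have ht : 0 < t := by omega
  have hbase : ∀ x y, (0 < (M ^ (i + t)) x y ↔ 0 < (M ^ i) x y) := by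
    intro x y
    have h1 : F a x y = F b x y := by rw [hf]
    have h2 : (0 < (M ^ (a + 1)) x y) ↔ (0 < (M ^ (b + 1)) x y) := decide_eq_decide.mp h1
    have e1 : i + t = b + 1 := by omega
    rw [e1]
    exact h2.symm
  have hshift : ∀ k, i ≤ k → ∀ x y, (0 < (M ^ (k + t)) x y ↔ 0 < (M ^ k) x y) := by
    intro k hk
    induction k, hk using Nat.le_induction with
    | base => exact hbase
    | succ k hk ih =>
      intro x y
      rw [show k + 1 + t = (k + t) + 1 from by omega, pow_succ, pow_succ, prodPos, prodPos]
      constructor <;> rintro ⟨z, h1, h2⟩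
      · exact ⟨z, (ih x z).mp h1, h2⟩
      · exact ⟨z, (ih x z).mpr h1, h2⟩
  have hcycle : ∀ n x y, (0 < (M ^ (i * t + n * t)) x y ↔ 0 < (M ^ (i * t)) x y) := by
    intro n
    induction n with
    | zero => simp
    | succ n ih =>
      intro x y
      rw [show i * t + (n + 1) * t = (i * t + n * t) + t from by ring]
      have hik : i ≤ i * t + n * t := by nlinarith
      exact (hshift _ hik x y).trans (ih x y)
  refine ⟨i * t, by positivity, fun x y => ?_⟩
  rw [show 2 * (i * t) = i * t + i * t from by ring]
  exact hcycle i x y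

private lemma colPos {A : Type*} [Fintype A] [DecidableEq A] (M : Matrix A A ℕ)
    (hcol : ∀ j : A, ∃ i : A, M i j ≠ 0) : ∀ k, ∀ c, ∃ r, 0 < (M ^ k) r c := by
  intro k
  induction k with
  | zero => exact fun c => ⟨c, by simp⟩
  | succ k ih =>
    intro c
    obtain ⟨z, hz⟩ := hcol c
    obtain ⟨r, hr⟩ := ih z
    exact ⟨r, by rw [pow_succ]; exact (prodPos _ _ _ _).mpr ⟨z, hr, Nat.pos_of_ne_zero hz⟩⟩

theorem stmt0 {A : Type*} [Fintype A] [DecidableEq A] [Nonempty A] (M : Matrix A A ℕ)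
    (hcol : ∀ j : A, ∃ i : A, M i j ≠ 0) :
    ∃ (p q l : ℕ) (P : A → Fin l), 0 < p ∧ q + 1 ≤ l ∧ Function.Surjective P ∧
      -- lower block-triangular: letters in row-group strictly below column-group give zero entries
      (∀ r c : A, P r < P c → (M ^ p) r c = 0) ∧
      -- diagonal blocks of non-principal components are primitive or zero
      (∀ i : Fin l, (i : ℕ) < q →
        ((∀ r c : {x // P x = i}, (M ^ p) r.1 c.1 = 0) ∨
          MatPrimitive (Matrix.of fun r c : {x // P x = i} => (M ^ p) r.1 c.1))) ∧
      -- diagonal blocks of principal components are primitive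
      (∀ i : Fin l, q ≤ (i : ℕ) →
        MatPrimitive (Matrix.of fun r c : {x // P x = i} => (M ^ p) r.1 c.1)) ∧
      -- off-diagonal blocks between two distinct principal components vanish
      (∀ r c : A, q ≤ ((P r) : ℕ) → q ≤ ((P c) : ℕ) → P r ≠ P c → (M ^ p) r c = 0) ∧
      -- every non-principal component feeds into some strictly later component
      (∀ i : Fin l, (i : ℕ) < q → ∃ r c : A, P c = i ∧ i < P r ∧ (M ^ p) r c ≠ 0) := by
  classical
  obtain ⟨p, hp, hid⟩ := existsPower M
  set E := M ^ p with hEdef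
  have hid' : ∀ x y, 0 < (E * E) x y ↔ 0 < E x y := by
    intro x y
    have hEE : E * E = M ^ (2 * p) := by rw [hEdef, ← pow_add]; ring_nf
    rw [hEE]; exact hid x y
  have htrans : ∀ x y z : A, 0 < E z y → 0 < E y x → 0 < E z x := by
    intro x y z h1 h2
    exact (hid' z x).mp ((prodPos E E z x).mpr ⟨y, h1, h2⟩)
  have hEcol : ∀ c, ∃ r, 0 < E r c := colPos M hcol p
  -- reachability preorder
  set Rh : A → A → Prop := fun x y => x = y ∨ 0 < E y x with hRh
  have hRtrans : ∀ x y z, Rh x y → Rh y z → Rh x z := by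
    rintro x y z (rfl | h1) h2
    · exact h2
    rcases h2 with rfl | h2
    · exact Or.inr h1
    · exact Or.inr (htrans _ _ _ h2 h1)
  letI s : Setoid A := ⟨fun x y => Rh x y ∧ Rh y x,
    ⟨fun x => ⟨Or.inl rfl, Or.inl rfl⟩, fun h => ⟨h.2, h.1⟩,
     fun h1 h2 => ⟨hRtrans _ _ _ h1.1 h2.1, hRtrans _ _ _ h2.2 h1.2⟩⟩⟩
  set Q := Quotient s with hQ
  letI : DecidableEq Q := Classical.decEq _
  letI : Fintype Q := Fintype.ofSurjective (Quotient.mk s) (fun C => C.exists_rep)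
  set Cl : Q → Prop :=
    fun C => ∀ x y : A, Quotient.mk s x = C → 0 < E y x → Quotient.mk s y = C with hCl
  set ht : Q → ℕ :=
    fun C => (Finset.univ.filter (fun x : A => ∃ a, Quotient.mk s a = C ∧ Rh x a)).card with hht
  set eQ := Fintype.equivFin Q with heQ
  set f : Q → Lex (Bool × Lex (ℕ × ℕ)) :=
    fun C => toLex (decide (Cl C), toLex (ht C, (eQ C : ℕ))) with hf
  have finj : Function.Injective f := by
    intro C D h
    have h2 : ((eQ C : ℕ)) = (eQ D : ℕ) := congrArg (fun z => (ofLex (ofLex z).2).2) h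
    exact eQ.injective (Fin.val_injective h2)
  letI : LinearOrder Q := LinearOrder.lift' f finj
  have hlt : ∀ C D : Q, C < D ↔ f C < f D := fun C D => Iff.rfl
  -- edges across distinct classes increase the order
  have edge_lt : ∀ x y : A, 0 < E y x → Quotient.mk s x ≠ Quotient.mk s y →
      Quotient.mk s x < Quotient.mk s y := by
    intro x y hxy hne
    have hnc : ¬ Cl (Quotient.mk s x) := fun h => hne ((h x y rfl hxy).symm)
    rw [hlt, hf]
    apply Prod.Lex.lt_iff.mpr
    rcases Classical.em (Cl (Quotient.mk s y)) with hcy | hcy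
    · left
      show decide (Cl (Quotient.mk s x)) < decide (Cl (Quotient.mk s y))
      rw [decide_eq_false hnc, decide_eq_true hcy]
      exact Bool.false_lt_true
    · right
      constructor
      · show decide (Cl (Quotient.mk s x)) = decide (Cl (Quotient.mk s y))
        rw [decide_eq_false hnc, decide_eq_false hcy]
      · apply Prod.Lex.lt_iff.mpr
        left
        show ht (Quotient.mk s x) < ht (Quotient.mk s y)
        apply Finset.card_lt_card
        rw [Finset.ssubset_iff_of_subset]
        · refine ⟨y, ?_, ?_⟩
          · simp only [Finset.mem_filter, Finset.mem_univ, true_and]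
            exact ⟨y, rfl, Or.inl rfl⟩
          · simp only [Finset.mem_filter, Finset.mem_univ, true_and]
            rintro ⟨a, ha, hra⟩
            have hax : Rh a x ∧ Rh x a := Quotient.exact ha
            have hyx : Rh y x := hRtrans _ _ _ hra hax.1
            exact hne (Quotient.sound ⟨Or.inr hxy, hyx⟩)
        · intro z hz
          simp only [Finset.mem_filter, Finset.mem_univ, true_and] at hz ⊢
          obtain ⟨a, ha, hra⟩ := hz
          have hax : Rh a x ∧ Rh x a := Quotient.exact ha
          exact ⟨y, rfl, hRtrans _ _ _ (hRtrans _ _ _ hra hax.1) (Or.inr hxy)⟩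
  have nc_lt_c : ∀ C D : Q, ¬ Cl C → Cl D → C < D := by
    intro C D h1 h2
    rw [hlt, hf]
    apply Prod.Lex.lt_iff.mpr
    left
    show decide (Cl C) < decide (Cl D)
    rw [decide_eq_false h1, decide_eq_true h2]
    exact Bool.false_lt_true
  haveI : Nonempty Q := Nonempty.map (Quotient.mk s) ‹Nonempty A›
  set l := Fintype.card Q with hl
  have hl0 : 0 < l := Fintype.card_pos
  set e := monoEquivOfFin Q (rfl : Fintype.card Q = l) with he
  set idx : Q → Fin l := fun C => e.symm C with hidx
  set q := Fintype.card {D : Q // ¬ Cl D} with hq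
  have qlt : ∀ C, ¬ Cl C → (idx C : ℕ) < q := by
    intro C hC
    have key : ∀ j : Fin l, j ≤ idx C → ¬ Cl (e j) := by
      intro j hj hcl
      have h1 : C < e j := nc_lt_c C (e j) hC hcl
      have h2 : e j ≤ C := by
        have := e.monotone hj
        rwa [show e (idx C) = C from e.apply_symm_apply C] at this
      exact absurd h1 (not_lt.mpr h2)
    have hle : Fintype.card (Set.Iic (idx C)) ≤ q := by
      apply Fintype.card_le_of_injective (fun j => ⟨e j.1, key j.1 (Set.mem_Iic.mp j.2)⟩)
      intro u v huv
      have h2 : e u.1 = e v.1 := by simpa using congrArg Subtype.val huv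
      exact Subtype.ext (e.injective h2)
    rw [show Fintype.card (Set.Iic (idx C)) = (idx C : ℕ) + 1 from by
      rw [← Fin.card_Iic]; exact Fintype.card_of_finset' _ fun _ => by simp] at hle
    omega
  have clq : ∀ C, Cl C → q ≤ (idx C : ℕ) := by
    intro C hC
    have hle : q ≤ Fintype.card (Set.Iio (idx C)) := by
      apply Fintype.card_le_of_injective
        (fun D => (⟨idx D.1, Set.mem_Iio.mpr (e.symm.strictMono (nc_lt_c D.1 C D.2 hC))⟩ :
          Set.Iio (idx C)))
      intro u v huv
      have h2 : e.symm u.1 = e.symm v.1 := congrArg Subtype.val huv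
      exact Subtype.ext (e.symm.injective h2)
    rw [show Fintype.card (Set.Iio (idx C)) = (idx C : ℕ) from by
      rw [← Fin.card_Iio]; exact Fintype.card_of_finset' _ fun _ => by simp] at hle
    exact hle
  -- the top class is closed
  have htop : Cl (e ⟨l - 1, by omega⟩) := by
    by_contra hc
    have hc' : ∃ x y : A, Quotient.mk s x = e ⟨l - 1, by omega⟩ ∧ 0 < E y x ∧
        Quotient.mk s y ≠ e ⟨l - 1, by omega⟩ := by
      by_contra hno
      push_neg at hno
      exact hc (fun x y hx hyx => hno x y hx hyx)
    obtain ⟨x, y, hx, hyx, hy⟩ := hc'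
    have hne : Quotient.mk s x ≠ Quotient.mk s y := fun h => hy (h ▸ hx)
    have h1 : Quotient.mk s x < Quotient.mk s y := edge_lt x y hyx hne
    rw [hx] at h1
    have h2 := e.symm.strictMono h1
    rw [show e.symm (e ⟨l - 1, by omega⟩) = ⟨l - 1, by omega⟩ from e.symm_apply_apply _] at h2
    have := (e.symm (Quotient.mk s y)).2
    simp only [Fin.lt_def] at h2
    omega
  have hql : q + 1 ≤ l := by
    have h1 := clq _ htop
    have h2 : idx (e ⟨l - 1, by omega⟩) = ⟨l - 1, by omega⟩ := e.symm_apply_apply _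
    rw [h2] at h1
    have h3 : ((⟨l - 1, by omega⟩ : Fin l) : ℕ) = l - 1 := rfl
    omega
  set P : A → Fin l := fun a => idx (Quotient.mk s a) with hP
  have fib : ∀ (i : Fin l) (x : A), P x = i ↔ Quotient.mk s x = e i := by
    intro i x
    constructor
    · intro h
      have := congrArg e h
      rwa [e.apply_symm_apply] at this
    · intro h
      show idx (Quotient.mk s x) = i
      rw [h]
      exact e.symm_apply_apply i
  have hsurj : Function.Surjective P := by
    intro j
    refine ⟨Quotient.out (e j), ?_⟩
    rw [fib]
    exact Quotient.out_eq _
  -- master positivity lemma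
  have master : ∀ a b x y : A, Quotient.mk s a = Quotient.mk s b →
      Quotient.mk s x = Quotient.mk s a → Quotient.mk s y = Quotient.mk s a →
      0 < E b a → 0 < E y x := by
    intro a b x y hab hxa hya hba
    have h1 : Rh x a := (Quotient.exact hxa).1
    have h2 : Rh b y := (Quotient.exact (hya.trans hab)).2
    have hxb : 0 < E b x := by
      rcases h1 with rfl | h1
      · exact hba
      · exact htrans x a b hba h1
    rcases h2 with rfl | h2
    · exact hxb
    · exact htrans x b y h2 hxb
  -- dichotomy for all diagonal blocks
  have blocks : ∀ i : Fin l, (∀ r c : {x // P x = i}, E r.1 c.1 = 0) ∨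
      MatPrimitive (Matrix.of fun r c : {x // P x = i} => E r.1 c.1) := by
    intro i
    rcases Classical.em (∃ r c : {x // P x = i}, 0 < E r.1 c.1) with ⟨⟨b, hb⟩, ⟨a, ha⟩, hpos⟩ | hno
    · right
      refine ⟨1, one_pos, fun r c => ?_⟩
      rw [pow_one]
      show 0 < E r.1 c.1
      exact master a b c.1 r.1
        (((fib i a).mp ha).trans ((fib i b).mp hb).symm)
        (((fib i c.1).mp c.2).trans ((fib i a).mp ha).symm)
        (((fib i r.1).mp r.2).trans ((fib i a).mp ha).symm)
        hpos
    · left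
      intro r c
      by_contra h0
      exact hno ⟨r, c, Nat.pos_of_ne_zero h0⟩
  refine ⟨p, q, l, P, hp, hql, hsurj, ?_, fun i _ => blocks i, ?_, ?_, ?_⟩
  · -- triangularity
    intro r c h
    by_contra h0
    have hpos : 0 < E r c := Nat.pos_of_ne_zero h0
    rcases Classical.em (Quotient.mk s c = Quotient.mk s r) with heq | hne
    · have hPeq : P c = P r := congrArg idx heq
      rw [hPeq] at h
      exact lt_irrefl _ h
    · have h1 := e.symm.strictMono (edge_lt c r hpos hne)
      exact absurd h (not_lt.mpr (le_of_lt h1))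
  · -- principal blocks primitive
    intro i hi
    have hcl : Cl (e i) := by
      by_contra hc
      have h1 := qlt (e i) hc
      have h2 : idx (e i) = i := e.symm_apply_apply i
      rw [h2] at h1
      omega
    rcases blocks i with hz | hpr
    · exfalso
      have ha : P (Quotient.out (e i)) = i := (fib i _).mpr (Quotient.out_eq _)
      obtain ⟨r, hr⟩ := hEcol (Quotient.out (e i))
      have hrC : Quotient.mk s r = e i := hcl _ r (Quotient.out_eq _) hr
      exact absurd (hz ⟨r, (fib i r).mpr hrC⟩ ⟨_, ha⟩) hr.ne'
    · exact hpr
  · -- between principal components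
    intro r c h1 h2 hne
    by_contra h0
    have hpos : 0 < E r c := Nat.pos_of_ne_zero h0
    have hclc : Cl (Quotient.mk s c) := by
      by_contra hc
      have h3 := qlt _ hc
      have h4 : (idx (Quotient.mk s c) : ℕ) = (P c : ℕ) := rfl
      omega
    have heq : Quotient.mk s r = Quotient.mk s c := hclc c r rfl hpos
    exact hne (congrArg idx heq)
  · -- feeding
    intro i hi
    have hnc : ¬ Cl (e i) := by
      intro hcl
      have h1 := clq _ hcl
      have h2 : idx (e i) = i := e.symm_apply_apply i
      rw [h2] at h1
      omega
    have hc' : ∃ x y : A, Quotient.mk s x = e i ∧ 0 < E y x ∧ Quotient.mk s y ≠ e i := by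
      by_contra hno
      push_neg at hno
      exact hnc (fun x y hx hyx => hno x y hx hyx)
    obtain ⟨x, y, hx, hyx, hy⟩ := hc'
    have hne : Quotient.mk s x ≠ Quotient.mk s y := fun h => hy (h ▸ hx)
    refine ⟨y, x, (fib i x).mpr hx, ?_, hyx.ne'⟩
    have h1 := e.symm.strictMono (edge_lt x y hyx hne)
    rw [hx] at h1
    have h2 : e.symm (e i) = i := e.symm_apply_apply i
    rw [h2] at h1
    show i < idx (Quotient.mk s y)
    exact h1
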